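/- The global trace coordinates determine a conjugacy class of pairs: if A, B, A', B' ∈ SU(2) satisfy tr A = tr A', tr B = tr B', and tr(A·B) = tr(A'·B'), then there exists U ∈ SU(2) such that A' = U·A·U⁻¹ and B' = U·B·U⁻¹. -/

import Mathlib

noncomputable def SU2 : Subgroup (Matrix.unitaryGroup (Fin 2) ℂ) where
  carrier := {A | Matrix.det (A : Matrix (Fin 2) (Fin 2) ℂ) = 1}
  mul_mem' := by
    intro a b ha hb
    simp only [Set.mem_setOf_eq, Matrix.UnitaryGroup.mul_val, Matrix.det_mul] at *
    rw [ha, hb, mul_one]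
  one_mem' := by simp
  inv_mem' := by
    intro a ha
    simp only [Set.mem_setOf_eq, Matrix.UnitaryGroup.inv_val] at *
    show Matrix.det (star a.val) = 1
    rw [Matrix.star_eq_conjTranspose, Matrix.det_conjTranspose, ha, star_one]

noncomputable def matSU (A : SU2) : Matrix (Fin 2) (Fin 2) ℂ :=
  ((A : Matrix.unitaryGroup (Fin 2) ℂ) : Matrix (Fin 2) (Fin 2) ℂ)

noncomputable def trSU (A : SU2) : ℝ := (Matrix.trace (matSU A)).re

open Matrix Complex

lemma matSU_mul (A B : SU2) : matSU (A * B) = matSU A * matSU B := rfl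
lemma matSU_one : matSU 1 = 1 := rfl

lemma matSU_det (A : SU2) : (matSU A).det = 1 := A.2

lemma matSU_unitary (A : SU2) : matSU A * star (matSU A) = 1 := by
  have := A.1.2
  exact (Matrix.mem_unitaryGroup_iff).mp A.1.2

lemma matSU_inv (A : SU2) : matSU A⁻¹ = star (matSU A) := rfl

lemma matSU_injective : Function.Injective matSU := by
  intro A B h
  exact Subtype.ext (Subtype.ext h)

lemma matSU_entries (A : SU2) :
    matSU A = !![matSU A 0 0, matSU A 0 1; -(starRingEnd ℂ) (matSU A 0 1), (starRingEnd ℂ) (matSU A 0 0)] := by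
  have hdet := matSU_det A
  have hadj : matSU A * (matSU A).adjugate = 1 := by
    rw [Matrix.mul_adjugate, hdet, one_smul]
  have hst : star (matSU A) = (matSU A).adjugate := by
    have hinv : Invertible (matSU A) := invertibleOfRightInverse _ _ (matSU_unitary A)
    calc star (matSU A) = ⅟(matSU A) := by
          have := matSU_unitary A
          exact (invOf_eq_right_inv this).symm
      _ = (matSU A).adjugate := invOf_eq_right_inv hadj
  have hadj2 : (matSU A).adjugate = !![matSU A 1 1, -(matSU A 0 1); -(matSU A 1 0), matSU A 0 0] := by
    rw [Matrix.eta_fin_two (matSU A), Matrix.adjugate_fin_two]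
  rw [hadj2] at hst
  have h11 : (starRingEnd ℂ) (matSU A 1 1) = matSU A 0 0 := by
    have := congrFun (congrFun hst 1) 1
    simpa [Matrix.star_eq_conjTranspose, Matrix.conjTranspose_apply] using this
  have h10 : (starRingEnd ℂ) (matSU A 1 0) = -(matSU A 0 1) := by
    have := congrFun (congrFun hst 0) 1
    simpa [Matrix.star_eq_conjTranspose, Matrix.conjTranspose_apply] using this
  have h10' : matSU A 1 0 = -(starRingEnd ℂ) (matSU A 0 1) := by
    have := congrArg (starRingEnd ℂ) h10; simpa using this
  have h11' : matSU A 1 1 = (starRingEnd ℂ) (matSU A 0 0) := by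
    have := congrArg (starRingEnd ℂ) h11; simpa using this
  ext i j
  fin_cases i <;> fin_cases j <;> simp [h10', h11']

lemma matSU_normSq (A : SU2) :
    Complex.normSq (matSU A 0 0) + Complex.normSq (matSU A 0 1) = 1 := by
  have hdet := matSU_det A
  rw [matSU_entries A, Matrix.det_fin_two_of] at hdet
  have : (matSU A 0 0) * (starRingEnd ℂ) (matSU A 0 0) + (matSU A 0 1) * (starRingEnd ℂ) (matSU A 0 1) = 1 := by
    rw [← hdet]; ring
  rw [Complex.mul_conj, Complex.mul_conj] at this
  exact_mod_cast congrArg Complex.re this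

lemma star_fin_two (a b c d : ℂ) :
    star !![a, b; c, d] = !![(starRingEnd ℂ) a, (starRingEnd ℂ) c; (starRingEnd ℂ) b, (starRingEnd ℂ) d] := by
  ext i j
  fin_cases i <;> fin_cases j <;>
    simp [Matrix.star_eq_conjTranspose, Matrix.conjTranspose_apply]

lemma mkSU_aux (a b : ℂ) (h : Complex.normSq a + Complex.normSq b = 1) :
    a * (starRingEnd ℂ) a + b * (starRingEnd ℂ) b = 1 := by
  rw [Complex.mul_conj, Complex.mul_conj]
  exact_mod_cast congrArg (Complex.ofReal) h

lemma mkSU_mem_unitary (a b : ℂ) (h : Complex.normSq a + Complex.normSq b = 1) :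
    !![a, b; -(starRingEnd ℂ) b, (starRingEnd ℂ) a] ∈ Matrix.unitaryGroup (Fin 2) ℂ := by
  rw [Matrix.mem_unitaryGroup_iff, star_fin_two, Matrix.mul_fin_two]
  have h' := mkSU_aux a b h
  ext i j
  fin_cases i <;> fin_cases j <;> simp [Matrix.one_apply] <;>
    first
      | linear_combination h'
      | linear_combination -h'
      | ring

lemma mkSU_mem_SU2 (a b : ℂ) (h : Complex.normSq a + Complex.normSq b = 1) :
    (⟨_, mkSU_mem_unitary a b h⟩ : Matrix.unitaryGroup (Fin 2) ℂ) ∈ SU2 := by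
  show Matrix.det _ = 1
  rw [Matrix.det_fin_two_of]
  linear_combination mkSU_aux a b h

noncomputable def mkSU (a b : ℂ) (h : Complex.normSq a + Complex.normSq b = 1) : SU2 :=
  ⟨⟨_, mkSU_mem_unitary a b h⟩, mkSU_mem_SU2 a b h⟩

lemma matSU_mkSU (a b : ℂ) (h : Complex.normSq a + Complex.normSq b = 1) :
    matSU (mkSU a b h) = !![a, b; -(starRingEnd ℂ) b, (starRingEnd ℂ) a] := rfl

lemma matSU_11 (A : SU2) : matSU A 1 1 = (starRingEnd ℂ) (matSU A 0 0) := by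
  conv_lhs => rw [matSU_entries A]
  simp

lemma matSU_10 (A : SU2) : matSU A 1 0 = -(starRingEnd ℂ) (matSU A 0 1) := by
  conv_lhs => rw [matSU_entries A]
  simp

lemma trSU_eq (A : SU2) : trSU A = 2 * (matSU A 0 0).re := by
  rw [trSU, Matrix.trace_fin_two, matSU_11]
  simp [Complex.add_re]
  ring

lemma trSU_conj (U A : SU2) : trSU (U * A * U⁻¹) = trSU A := by
  unfold trSU
  rw [matSU_mul, matSU_mul, Matrix.trace_mul_comm, ← Matrix.mul_assoc,
    ← matSU_mul, inv_mul_cancel, matSU_one, Matrix.one_mul]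

lemma trSU_sq_le (A : SU2) : (trSU A / 2) ^ 2 ≤ 1 := by
  rw [trSU_eq]
  have h := matSU_normSq A
  have h1 : (matSU A 0 0).re ^ 2 ≤ Complex.normSq (matSU A 0 0) := by
    rw [Complex.normSq_apply]; nlinarith [sq_nonneg (matSU A 0 0).im]
  have h2 : Complex.normSq (matSU A 0 1) ≥ 0 := Complex.normSq_nonneg _
  nlinarith

/-- the eigenvalue `t + i √(1-t²)` -/
noncomputable def lam (t : ℝ) : ℂ := (t : ℂ) + (Real.sqrt (1 - t ^ 2) : ℂ) * Complex.I

lemma normSq_lam (t : ℝ) (ht : t ^ 2 ≤ 1) : Complex.normSq (lam t) + Complex.normSq 0 = 1 := by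
  have h0 : (0:ℝ) ≤ 1 - t ^ 2 := by linarith
  have : Real.sqrt (1 - t ^ 2) ^ 2 = 1 - t ^ 2 := Real.sq_sqrt h0
  simp [lam, Complex.normSq_apply]
  nlinarith

/-- diagonal element of SU(2) with eigenvalue `lam t` -/
noncomputable def Dm (t : ℝ) (ht : t ^ 2 ≤ 1) : SU2 := mkSU (lam t) 0 (normSq_lam t ht)

lemma matSU_Dm (t : ℝ) (ht : t ^ 2 ≤ 1) :
    matSU (Dm t ht) = !![lam t, 0; 0, (starRingEnd ℂ) (lam t)] := by
  rw [Dm, matSU_mkSU]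
  norm_num

lemma trSU_Dm (t : ℝ) (ht : t ^ 2 ≤ 1) : trSU (Dm t ht) = 2 * t := by
  rw [trSU_eq, matSU_Dm]
  simp [lam]

lemma conj_lam (t : ℝ) : (starRingEnd ℂ) (lam t) =
    (t : ℂ) - (Real.sqrt (1 - t ^ 2) : ℂ) * Complex.I := by
  simp [lam, Complex.conj_ofReal]
  ring

lemma diagSU (A : SU2) (t : ℝ) (ht : t ^ 2 ≤ 1) (htr : trSU A = 2 * t) :
    ∃ V : SU2, V * A * V⁻¹ = Dm t ht := by
  set a := matSU A 0 0 with ha_def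
  set b := matSU A 0 1 with hb_def
  have hre : a.re = t := by
    have := trSU_eq A
    rw [htr] at this
    linarith
  set u : ℝ := a.im with hu_def
  set s : ℝ := Real.sqrt (1 - t ^ 2) with hs_def
  have hs0 : 0 ≤ s := Real.sqrt_nonneg _
  have hs2 : s ^ 2 = 1 - t ^ 2 := Real.sq_sqrt (by linarith)
  have hns : Complex.normSq a = t ^ 2 + u ^ 2 := by
    rw [Complex.normSq_apply, hre]; ring
  have hnb : Complex.normSq b = s ^ 2 - u ^ 2 := by
    have := matSU_normSq A
    rw [hns] at this; linarith
  have ha : a = (t : ℂ) + (u : ℂ) * Complex.I := by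
    rw [← Complex.re_add_im a, hre]
  have hac : (starRingEnd ℂ) a = (t : ℂ) - (u : ℂ) * Complex.I := by
    rw [ha]; simp [Complex.conj_ofReal]; ring
  have hbb : b * (starRingEnd ℂ) b = ((s : ℂ)) ^ 2 - ((u : ℂ)) ^ 2 := by
    rw [Complex.mul_conj, hnb]; push_cast; ring
  have hsu : s ^ 2 ≥ u ^ 2 := by
    have := Complex.normSq_nonneg b; linarith [hnb]
  by_cases h1 : s = u
  · -- b = 0, a = lam t, A is already diagonal
    have hb0 : b = 0 := by
      have : Complex.normSq b = 0 := by rw [hnb, h1]; ring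
      exact Complex.normSq_eq_zero.mp this
    refine ⟨1, ?_⟩
    have hA : A = Dm t ht := by
      apply matSU_injective
      have hlam : lam t = a := by
        rw [ha, lam, ← hs_def, h1]
      rw [matSU_entries A, matSU_Dm, ← ha_def, ← hb_def, hb0, hlam]
      simp
    rw [hA]; group
  by_cases h2 : s = -u
  · -- b = 0, a = conj (lam t)
    have hb0 : b = 0 := by
      have : Complex.normSq b = 0 := by rw [hnb, h2]; ring
      exact Complex.normSq_eq_zero.mp this
    have hW : Complex.normSq 0 + Complex.normSq 1 = 1 := by simp
    refine ⟨mkSU 0 1 hW, ?_⟩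
    rw [mul_inv_eq_iff_eq_mul]
    apply matSU_injective
    have hlam : lam t = (starRingEnd ℂ) a := by
      rw [hac, lam, ← hs_def, h2]; push_cast; ring
    rw [matSU_mul, matSU_mul, matSU_mkSU, matSU_Dm, matSU_entries A,
      ← ha_def, ← hb_def, hb0, hlam]
    ext i j
    fin_cases i <;> fin_cases j <;>
      simp [Matrix.mul_apply, Fin.sum_univ_two, Complex.conj_conj]
  · -- generic case
    have hsu1 : s - u > 0 := by
      rcases lt_trichotomy u s with h | h | h
      · linarith
      · exact absurd h.symm h1
      · nlinarith
    have hsu2 : s + u > 0 := by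
      rcases lt_trichotomy (-u) s with h | h | h
      · linarith
      · exact absurd h.symm h2
      · nlinarith
    set n : ℝ := Real.sqrt (2 * s * (s - u)) with hn_def
    have hn2 : n ^ 2 = 2 * s * (s - u) := Real.sq_sqrt (by nlinarith)
    have hn0 : n ≠ 0 := by
      intro h
      rw [h] at hn2; nlinarith
    have hnC : (n : ℂ) ≠ 0 := Complex.ofReal_ne_zero.mpr hn0
    have hs_pos : 0 < s := by linarith
    have hmem : Complex.normSq (b / (n : ℂ)) +
        Complex.normSq (Complex.I * ((s : ℂ) - (u : ℂ)) / (n : ℂ)) = 1 := by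
      have hcast : ((s : ℂ) - (u : ℂ)) = ((s - u : ℝ) : ℂ) := by push_cast; ring
      have hnsu : Complex.normSq ((s : ℂ) - (u : ℂ)) = (s - u) ^ 2 := by
        rw [hcast, Complex.normSq_ofReal]; ring
      have hnn : Complex.normSq ((n : ℂ)) = n ^ 2 := by
        rw [Complex.normSq_ofReal]; ring
      rw [Complex.normSq_div, Complex.normSq_div, Complex.normSq_mul,
        Complex.normSq_I, hnsu, hnb, hnn, hn2]
      have h2s : 2 * s * (s - u) ≠ 0 := by positivity
      field_simp
      ring
    refine ⟨(mkSU (b / (n : ℂ)) (Complex.I * ((s : ℂ) - (u : ℂ)) / (n : ℂ)) hmem)⁻¹, ?_⟩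
    rw [inv_inv]
    set V := mkSU (b / (n : ℂ)) (Complex.I * ((s : ℂ) - (u : ℂ)) / (n : ℂ)) hmem with hV_def
    have hAV : A * V = V * Dm t ht := by
      apply matSU_injective
      rw [matSU_mul, matSU_mul, matSU_mkSU, matSU_Dm, matSU_entries A,
        ← ha_def, ← hb_def]
      ext i j
      fin_cases i <;> fin_cases j <;>
        simp [Matrix.mul_apply, Fin.sum_univ_two, lam, ha, hac, map_div₀,
          Complex.conj_ofReal, Complex.conj_I] <;>
        field_simp <;>
        try ring
      case _ =>
        linear_combination hbb + ((s:ℂ)^2 - (u:ℂ)^2) * Complex.I_sq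
      case _ =>
        linear_combination -hbb - ((s:ℂ)^2 - (u:ℂ)^2) * Complex.I_sq
    calc V⁻¹ * A * V = V⁻¹ * (A * V) := by rw [mul_assoc]
      _ = V⁻¹ * (V * Dm t ht) := by rw [hAV]
      _ = Dm t ht := inv_mul_cancel_left _ _

lemma conj_conj_lemma (V V' M X X' D E : SU2) (h1 : V * X * V⁻¹ = D)
    (h2 : V' * X' * V'⁻¹ = E) (h3 : M * D * M⁻¹ = E) :
    X' = (V'⁻¹ * M * V) * X * (V'⁻¹ * M * V)⁻¹ := by
  have hX' : X' = V'⁻¹ * E * V' := by rw [← h2]; group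
  rw [hX', ← h3, ← h1]; group

lemma trSU_Dm_mul (t : ℝ) (ht : t ^ 2 ≤ 1) (C : SU2) :
    trSU (Dm t ht * C) =
      2 * (t * (matSU C 0 0).re - Real.sqrt (1 - t ^ 2) * (matSU C 0 0).im) := by
  rw [trSU, matSU_mul, matSU_Dm, matSU_entries C, Matrix.mul_fin_two,
    Matrix.trace_fin_two]
  simp [lam, Complex.add_re, Complex.mul_re, Complex.mul_im, Complex.conj_re,
    Complex.conj_im, Complex.ofReal_re, Complex.ofReal_im, Complex.I_re, Complex.I_im]
  ring

lemma key_lemma (t : ℝ) (ht : t ^ 2 ≤ 1) (C C' : SU2) (h1 : trSU C = trSU C')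
    (h2 : trSU (Dm t ht * C) = trSU (Dm t ht * C')) :
    ∃ M : SU2, M * C * M⁻¹ = C' ∧ M * (Dm t ht) * M⁻¹ = Dm t ht := by
  set s : ℝ := Real.sqrt (1 - t ^ 2) with hs_def
  by_cases hs : s = 0
  · -- central case : Dm t ht commutes with everything
    have hlam : lam t = (t : ℂ) := by
      rw [lam, ← hs_def, hs]; simp
    have hcomm : ∀ U : SU2, U * Dm t ht = Dm t ht * U := by
      intro U
      apply matSU_injective
      rw [matSU_mul, matSU_mul, matSU_Dm, matSU_entries U, hlam]
      ext i j
      fin_cases i <;> fin_cases j <;>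
        simp [Matrix.mul_fin_two, Complex.conj_ofReal] <;> ring
    set tC : ℝ := trSU C / 2 with htC_def
    have htC : tC ^ 2 ≤ 1 := trSU_sq_le C
    obtain ⟨W, hW⟩ := diagSU C tC htC (by rw [htC_def]; ring)
    obtain ⟨W', hW'⟩ := diagSU C' tC htC (by rw [htC_def, h1]; ring)
    refine ⟨W'⁻¹ * W, ?_, ?_⟩
    · rw [← hW'] at hW
      -- W * C * W⁻¹ = W' * C' * W'⁻¹
      have := congrArg (fun X => W'⁻¹ * X * W') hW
      calc (W'⁻¹ * W) * C * (W'⁻¹ * W)⁻¹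
          = W'⁻¹ * (W * C * W⁻¹) * W' := by group
        _ = W'⁻¹ * (W' * C' * W'⁻¹) * W' := by rw [hW]
        _ = C' := by group
    · rw [mul_inv_eq_iff_eq_mul]; exact hcomm _
  · -- noncentral case
    have hpre : (matSU C 0 0).re = (matSU C' 0 0).re := by
      rw [trSU_eq, trSU_eq] at h1; linarith
    have hpim : (matSU C 0 0).im = (matSU C' 0 0).im := by
      rw [trSU_Dm_mul, trSU_Dm_mul, ← hs_def] at h2
      have hs0 : 0 ≤ s := Real.sqrt_nonneg _
      have : s * (matSU C 0 0).im = s * (matSU C' 0 0).im := by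
        rw [hpre] at h2; linarith
      exact mul_left_cancel₀ hs this
    have hp : matSU C 0 0 = matSU C' 0 0 := Complex.ext hpre hpim
    have hq : Complex.normSq (matSU C' 0 1) = Complex.normSq (matSU C 0 1) := by
      have hA := matSU_normSq C
      have hB := matSU_normSq C'
      rw [hp] at hA; linarith
    by_cases hq0 : matSU C 0 1 = 0
    · have hq'0 : matSU C' 0 1 = 0 := by
        have h0 : Complex.normSq (matSU C' 0 1) = 0 := by
          rw [hq0, Complex.normSq_zero] at hq; exact hq
        exact Complex.normSq_eq_zero.mp h0
      have hCC' : C = C' := by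
        apply matSU_injective
        rw [matSU_entries C, matSU_entries C', hp, hq0, hq'0]
      refine ⟨1, ?_, ?_⟩ <;> simp [hCC']
    · -- q ≠ 0 : conjugate by diag(μ, conj μ) with μ² = q'/q
      obtain ⟨μ, hμ⟩ := IsAlgClosed.exists_pow_nat_eq (matSU C' 0 1 / matSU C 0 1)
        (n := 2) (by norm_num)
      have hnμ : Complex.normSq μ = 1 := by
        have h2' : Complex.normSq μ ^ 2 = 1 := by
          rw [← map_pow, hμ, map_div₀, hq,
            div_self (fun h => hq0 (Complex.normSq_eq_zero.mp h))]
        nlinarith [Complex.normSq_nonneg μ]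
      have hmem : Complex.normSq μ + Complex.normSq 0 = 1 := by simp [hnμ]
      refine ⟨mkSU μ 0 hmem, ?_, ?_⟩
      · rw [mul_inv_eq_iff_eq_mul]
        apply matSU_injective
        have hμq : μ ^ 2 * matSU C 0 1 = matSU C' 0 1 := by
          rw [hμ]; field_simp
        have hμqc : ((starRingEnd ℂ) μ) ^ 2 * (starRingEnd ℂ) (matSU C 0 1)
            = (starRingEnd ℂ) (matSU C' 0 1) := by
          have := congrArg (starRingEnd ℂ) hμq
          simpa using this
        have hpc : (starRingEnd ℂ) (matSU C 0 0) = (starRingEnd ℂ) (matSU C' 0 0) :=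
          congrArg _ hp
        have hμμ : μ * (starRingEnd ℂ) μ = 1 := by
          rw [Complex.mul_conj, hnμ]; simp
        rw [matSU_mul, matSU_mul, matSU_mkSU, matSU_entries C, matSU_entries C']
        ext i j
        fin_cases i <;> fin_cases j <;>
          simp [Matrix.mul_fin_two] <;>
          first
            | linear_combination μ * hp
            | linear_combination (starRingEnd ℂ) μ * hμq - μ * matSU C 0 1 * hμμ
            | linear_combination -μ * hμqc +
                (starRingEnd ℂ) μ * (starRingEnd ℂ) (matSU C 0 1) * hμμ
            | linear_combination μ * hμqc -
                (starRingEnd ℂ) μ * (starRingEnd ℂ) (matSU C 0 1) * hμμ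
            | linear_combination -((starRingEnd ℂ) μ) * hμq + μ * matSU C 0 1 * hμμ
            | linear_combination (starRingEnd ℂ) μ * hpc
            | ring
      · rw [mul_inv_eq_iff_eq_mul]
        apply matSU_injective
        rw [matSU_mul, matSU_mul, matSU_mkSU, matSU_Dm]
        ext i j
        fin_cases i <;> fin_cases j <;>
          simp [Matrix.mul_fin_two] <;> ring

/-- Trace coordinates determine pairs in `SU(2)` up to simultaneous conjugation. -/
theorem trace_triple_determines_conjugacy (A B A' B' : SU2)
    (hx : trSU A = trSU A') (hy : trSU B = trSU B') (hz : trSU (A * B) = trSU (A' * B')) :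
    ∃ U : SU2, A' = U * A * U⁻¹ ∧ B' = U * B * U⁻¹ := by
  set t : ℝ := trSU A / 2 with ht_def
  have ht : t ^ 2 ≤ 1 := trSU_sq_le A
  obtain ⟨V, hV⟩ := diagSU A t ht (by rw [ht_def]; ring)
  obtain ⟨V', hV'⟩ := diagSU A' t ht (by rw [ht_def, hx]; ring)
  set C := V * B * V⁻¹ with hC_def
  set C' := V' * B' * V'⁻¹ with hC'_def
  have htrCC' : trSU C = trSU C' := by
    rw [hC_def, hC'_def, trSU_conj, trSU_conj, hy]
  have hDC : Dm t ht * C = V * (A * B) * V⁻¹ := by rw [← hV, hC_def]; group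
  have hDC' : Dm t ht * C' = V' * (A' * B') * V'⁻¹ := by rw [← hV', hC'_def]; group
  have htrDC : trSU (Dm t ht * C) = trSU (Dm t ht * C') := by
    rw [hDC, hDC', trSU_conj, trSU_conj, hz]
  obtain ⟨M, hMC, hMD⟩ := key_lemma t ht C C' htrCC' htrDC
  refine ⟨V'⁻¹ * M * V, ?_, ?_⟩
  · exact conj_conj_lemma V V' M A A' (Dm t ht) (Dm t ht) hV hV' hMD
  · exact conj_conj_lemma V V' M B B' C C' rfl rfl hMC
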